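/- Suppose f ∈ F[x_1,...,x_n] satisfies f ∈ I(s, m(s)) for all s ∈ S except for at least one point s* ∈ D = D_1 × ⋯ × D_n with f ∉ I(s*, m(s*)). Then deg f ≥ Σ_{i=1}^n (d(S_i) − d(D_i)), where d(D_i) = Σ_{s ∈ D_i} m_i(s). -/

import Mathlib

open MvPolynomial

/-- The Taylor coefficient `f_u(s)`: the coefficient of `x^u` in `f(x + s)`. -/
noncomputable def taylorCoeff {F : Type*} [Field F] {n : ℕ}
    (f : MvPolynomial (Fin n) F) (s : Fin n → F) (u : Fin n →₀ ℕ) : F :=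
  coeff u (aeval (fun i => X i + C (s i)) f)

/-- Membership in the ideal `I(s, w)`: all Taylor coefficients `f_u(s)` with
`u < w` (componentwise) vanish. -/
def memPointIdeal {F : Type*} [Field F] {n : ℕ}
    (f : MvPolynomial (Fin n) F) (s : Fin n → F) (w : Fin n → ℕ) : Prop :=
  ∀ u : Fin n →₀ ℕ, (∀ i, u i < w i) → taylorCoeff f s u = 0

/-- The polynomial `g_i(x_i) = ∏_{s ∈ S_i} (x_i - s)^{m_i(s)}`. -/
noncomputable def gPoly {F : Type*} [Field F] {n : ℕ}
    (S : Fin n → Finset F) (m : Fin n → F → ℕ) (i : Fin n) : MvPolynomial (Fin n) F :=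
  ∏ s ∈ S i, (X i - C s) ^ m i s

/-- The size `d_i = Σ_{s ∈ S_i} m_i(s)` of the multiset `(S_i, m_i)`. -/
def dSize {F : Type*} {n : ℕ} (S : Fin n → Finset F) (m : Fin n → F → ℕ) (i : Fin n) : ℕ :=
  ∑ s ∈ S i, m i s
namespace PCN

variable {F : Type*} [Field F] {n : ℕ}

/-- The shift (translation) algebra endomorphism `x_i ↦ x_i + s_i`. -/
noncomputable def tauA (s : Fin n → F) : MvPolynomial (Fin n) F →ₐ[F] MvPolynomial (Fin n) F :=
  aeval (fun i => X i + C (s i))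

lemma taylorCoeff_eq (f : MvPolynomial (Fin n) F) (s u) :
    taylorCoeff f s u = coeff u (tauA s f) := rfl

lemma mpi_zero (s : Fin n → F) (w : Fin n → ℕ) :
    memPointIdeal (0 : MvPolynomial (Fin n) F) s w := by
  intro u _; simp [taylorCoeff]

lemma mpi_add {f g : MvPolynomial (Fin n) F} {s w} (hf : memPointIdeal f s w)
    (hg : memPointIdeal g s w) : memPointIdeal (f + g) s w := by
  intro u hu
  have : taylorCoeff (f + g) s u = taylorCoeff f s u + taylorCoeff g s u := by
    simp [taylorCoeff, map_add, coeff_add]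
  rw [this, hf u hu, hg u hu, add_zero]

lemma mpi_sub {f g : MvPolynomial (Fin n) F} {s w} (hf : memPointIdeal f s w)
    (hg : memPointIdeal g s w) : memPointIdeal (f - g) s w := by
  intro u hu
  have : taylorCoeff (f - g) s u = taylorCoeff f s u - taylorCoeff g s u := by
    simp [taylorCoeff, map_sub, coeff_sub]
  rw [this, hf u hu, hg u hu, sub_zero]

lemma mpi_mul {f : MvPolynomial (Fin n) F} {s w} (hf : memPointIdeal f s w)
    (g : MvPolynomial (Fin n) F) : memPointIdeal (g * f) s w := by
  intro u hu
  rw [taylorCoeff_eq, map_mul, MvPolynomial.coeff_mul]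
  refine Finset.sum_eq_zero fun x hx => ?_
  rw [Finset.HasAntidiagonal.mem_antidiagonal] at hx
  have h2 : ∀ i, x.2 i < w i := fun i => by
    have h1 : x.1 i + x.2 i = u i := by rw [← Finsupp.add_apply, hx]
    have := hu i; omega
  rw [show coeff x.2 ((tauA s) f) = taylorCoeff f s x.2 from rfl, hf x.2 h2, mul_zero]

lemma mpi_mul' {f : MvPolynomial (Fin n) F} {s w} (hf : memPointIdeal f s w)
    (g : MvPolynomial (Fin n) F) : memPointIdeal (f * g) s w := by
  rw [mul_comm]; exact mpi_mul hf g

lemma mpi_sum {ι : Type*} {t : Finset ι} {p : ι → MvPolynomial (Fin n) F} {s w}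
    (h : ∀ i ∈ t, memPointIdeal (p i) s w) : memPointIdeal (∑ i ∈ t, p i) s w := by
  classical
  induction t using Finset.induction_on with
  | empty => simpa using mpi_zero s w
  | insert _ _ hx ih =>
    rw [Finset.sum_insert hx]
    exact mpi_add (h _ (Finset.mem_insert_self _ _))
      (ih fun i hi => h i (Finset.mem_insert_of_mem hi))


lemma coeff_comp_eq_sum {A : Type*} [CommSemiring A] (p u : Polynomial A) (k : ℕ) :
    (p.comp u).coeff k = ∑ j ∈ p.support, p.coeff j * (u ^ j).coeff k := by
  rw [Polynomial.comp, Polynomial.eval₂_eq_sum, Polynomial.sum, Polynomial.finset_sum_coeff]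
  exact Finset.sum_congr rfl fun j _ => by rw [Polynomial.coeff_C_mul]

/-- Apply a linear functional to each coefficient of a polynomial over
`MvPolynomial (Fin n) F`. -/
noncomputable def pmap (L : MvPolynomial (Fin n) F →ₗ[F] F)
    (p : Polynomial (MvPolynomial (Fin n) F)) : Polynomial F :=
  ∑ j ∈ p.support, Polynomial.monomial j (L (p.coeff j))

lemma pmap_coeff (L : MvPolynomial (Fin n) F →ₗ[F] F) (p : Polynomial (MvPolynomial (Fin n) F))
    (k : ℕ) : (pmap L p).coeff k = L (p.coeff k) := by
  rw [pmap, Polynomial.finset_sum_coeff]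
  simp only [Polynomial.coeff_monomial]
  rw [Finset.sum_ite_eq' p.support k (fun j => L (p.coeff j))]
  by_cases h : k ∈ p.support
  · rw [if_pos h]
  · rw [if_neg h, Polynomial.notMem_support_iff.mp h, map_zero]

lemma pmap_degree_le (L : MvPolynomial (Fin n) F →ₗ[F] F)
    (p : Polynomial (MvPolynomial (Fin n) F)) : (pmap L p).degree ≤ p.degree := by
  refine (Polynomial.degree_sum_le _ _).trans ?_
  refine Finset.sup_le fun j hj => ?_
  exact (Polynomial.degree_monomial_le j _).trans (Polynomial.le_degree_of_ne_zero
    (Polynomial.mem_support_iff.mp hj))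

/-- The `k`-th Taylor coefficient in the distinguished variable, at `c`. -/
noncomputable def slice (p : Polynomial (MvPolynomial (Fin n) F)) (c : F) (k : ℕ) :
    MvPolynomial (Fin n) F :=
  (p.comp (Polynomial.X + Polynomial.C (C c))).coeff k

lemma slice_add (p q : Polynomial (MvPolynomial (Fin n) F)) (c : F) (k : ℕ) :
    slice (p + q) c k = slice p c k + slice q c k := by
  simp [slice, Polynomial.add_comp]

lemma slice_sub (p q : Polynomial (MvPolynomial (Fin n) F)) (c : F) (k : ℕ) :
    slice (p - q) c k = slice p c k - slice q c k := by
  simp [slice, Polynomial.sub_comp]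

lemma slice_mul (p q : Polynomial (MvPolynomial (Fin n) F)) (c : F) (k : ℕ) :
    slice (p * q) c k = ∑ x ∈ Finset.HasAntidiagonal.antidiagonal k, slice p c x.1 * slice q c x.2 := by
  rw [slice, Polynomial.mul_comp, Polynomial.coeff_mul]; rfl

lemma pow_comp_X_add (c : F) (w : ℕ) :
    ((Polynomial.X - Polynomial.C (C c : MvPolynomial (Fin n) F)) ^ w).comp
      (Polynomial.X + Polynomial.C (C c)) = Polynomial.X ^ w := by
  rw [Polynomial.pow_comp, Polynomial.sub_comp, Polynomial.X_comp, Polynomial.C_comp]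
  ring

lemma X_add_C_map (c : F) :
    (Polynomial.X + Polynomial.C (C c : MvPolynomial (Fin n) F)) =
      Polynomial.map (algebraMap F (MvPolynomial (Fin n) F))
        (Polynomial.X + Polynomial.C c) := by
  simp [Polynomial.map_add, MvPolynomial.algebraMap_eq]

lemma slice_eq_sum (p : Polynomial (MvPolynomial (Fin n) F)) (c : F) (k : ℕ) :
    slice p c k = ∑ j ∈ p.support,
      p.coeff j * C (((Polynomial.X + Polynomial.C c) ^ j).coeff k) := by
  rw [slice, coeff_comp_eq_sum]
  refine Finset.sum_congr rfl fun j _ => ?_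
  congr 1
  rw [X_add_C_map, ← Polynomial.map_pow, Polynomial.coeff_map, MvPolynomial.algebraMap_eq]

lemma pmap_support_subset (L : MvPolynomial (Fin n) F →ₗ[F] F)
    (p : Polynomial (MvPolynomial (Fin n) F)) : (pmap L p).support ⊆ p.support := by
  intro j hj
  rw [Polynomial.mem_support_iff, pmap_coeff] at hj
  rw [Polynomial.mem_support_iff]
  intro h0; rw [h0, map_zero] at hj; exact hj rfl

lemma sliceF_pmap (L : MvPolynomial (Fin n) F →ₗ[F] F)
    (p : Polynomial (MvPolynomial (Fin n) F)) (c : F) (k : ℕ) :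
    ((pmap L p).comp (Polynomial.X + Polynomial.C c)).coeff k = L (slice p c k) := by
  rw [coeff_comp_eq_sum, slice_eq_sum, map_sum]
  rw [Finset.sum_subset (pmap_support_subset L p) (fun j _ hj => by
    rw [Polynomial.notMem_support_iff.mp hj, zero_mul])]
  refine Finset.sum_congr rfl fun j _ => ?_
  rw [pmap_coeff]
  have : p.coeff j * C (((Polynomial.X + Polynomial.C c) ^ j).coeff k)
      = (((Polynomial.X + Polynomial.C c) ^ j).coeff k) • p.coeff j := by
    rw [MvPolynomial.smul_eq_C_mul, mul_comm]
  rw [this, map_smul, smul_eq_mul, mul_comm]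

noncomputable def compA (c : F) :
    Polynomial (MvPolynomial (Fin n) F) →ₐ[F] Polynomial (MvPolynomial (Fin n) F) :=
  (Polynomial.aeval (Polynomial.X + Polynomial.C (C c))).restrictScalars F

lemma compA_apply (c : F) (p : Polynomial (MvPolynomial (Fin n) F)) :
    compA c p = p.comp (Polynomial.X + Polynomial.C (C c)) := by
  simp [compA, Polynomial.aeval_def, Polynomial.comp, Polynomial.algebraMap_eq]

lemma keyHom (c : F) (s : Fin n → F) (f : MvPolynomial (Fin (n + 1)) F) :
    finSuccEquiv F n (aeval (fun i => X i + C (Fin.cons c s i)) f)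
      = Polynomial.map (tauA s).toRingHom
          ((finSuccEquiv F n f).comp (Polynomial.X + Polynomial.C (C c))) := by
  have h : (((finSuccEquiv F n).toAlgHom).comp (tauA (Fin.cons c s)))
      = ((Polynomial.mapAlgHom (tauA s)).comp ((compA c).comp (finSuccEquiv F n).toAlgHom)) := by
    apply MvPolynomial.algHom_ext
    intro i
    refine Fin.cases ?_ (fun j => ?_) i
    · simp only [AlgHom.coe_comp, Function.comp_apply, AlgEquiv.toAlgHom_eq_coe,
        AlgHom.coe_coe, tauA, aeval_X, Fin.cons_zero, compA_apply,
        Polynomial.mapAlgHom, AlgHom.coe_mk, RingHom.coe_mk, MonoidHom.coe_mk, OneHom.coe_mk]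
      rw [map_add, AlgEquiv.coe_algHom, finSuccEquiv_X_zero]
      have hc : (C c : MvPolynomial (Fin (n+1)) F) = algebraMap F _ c := rfl
      rw [hc, AlgEquiv.commutes]
      simp [Polynomial.add_comp, Polynomial.X_comp, Polynomial.C_comp, Polynomial.map_add,
        Polynomial.algebraMap_apply, MvPolynomial.algebraMap_eq, tauA]
    · simp only [AlgHom.coe_comp, Function.comp_apply, AlgEquiv.toAlgHom_eq_coe,
        AlgHom.coe_coe, tauA, aeval_X, Fin.cons_succ, compA_apply,
        Polynomial.mapAlgHom, AlgHom.coe_mk, RingHom.coe_mk, MonoidHom.coe_mk, OneHom.coe_mk]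
      rw [map_add, AlgEquiv.coe_algHom, finSuccEquiv_X_succ]
      have hc : (C (s j) : MvPolynomial (Fin (n+1)) F) = algebraMap F _ (s j) := rfl
      rw [hc, AlgEquiv.commutes]
      simp [Polynomial.add_comp, Polynomial.C_comp, Polynomial.map_add,
        Polynomial.algebraMap_apply, MvPolynomial.algebraMap_eq, tauA]
  have h2 := DFunLike.congr_fun h f
  simp only [AlgHom.coe_comp, Function.comp_apply, AlgEquiv.toAlgHom_eq_coe, AlgHom.coe_coe,
    tauA, compA_apply, Polynomial.mapAlgHom, AlgHom.coe_mk, RingHom.coe_mk, MonoidHom.coe_mk,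
    OneHom.coe_mk] at h2
  exact h2

lemma taylorCoeff_cons (f : MvPolynomial (Fin (n + 1)) F) (c : F) (s : Fin n → F) (k : ℕ)
    (u : Fin n →₀ ℕ) :
    taylorCoeff f (Fin.cons c s) (u.cons k)
      = taylorCoeff (slice (finSuccEquiv F n f) c k) s u := by
  rw [taylorCoeff, ← finSuccEquiv_coeff_coeff, keyHom, Polynomial.coeff_map]
  rfl

/-- Sliced ideal membership: all slices of order `< w0` lie in the lower-dimensional ideal. -/
def memP (p : Polynomial (MvPolynomial (Fin n) F)) (c : F) (s : Fin n → F) (w0 : ℕ)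
    (w : Fin n → ℕ) : Prop :=
  ∀ k < w0, memPointIdeal (slice p c k) s w

lemma memP_mul {p : Polynomial (MvPolynomial (Fin n) F)} {c s w0 w}
    (hp : memP p c s w0 w) (t : Polynomial (MvPolynomial (Fin n) F)) :
    memP (t * p) c s w0 w := by
  intro k hk
  rw [slice_mul]
  refine mpi_sum fun x hx => ?_
  have hx2 : x.2 ≤ k := by
    have := Finset.HasAntidiagonal.mem_antidiagonal.mp hx; omega
  exact mpi_mul (hp x.2 (lt_of_le_of_lt hx2 hk)) _

lemma memP_Xpow_mul (c : F) (s : Fin n → F) (w0 : ℕ) (w : Fin n → ℕ)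
    (t : Polynomial (MvPolynomial (Fin n) F)) :
    memP ((Polynomial.X - Polynomial.C (C c)) ^ w0 * t) c s w0 w := by
  intro k hk
  have hz : slice ((Polynomial.X - Polynomial.C (C c)) ^ w0 * t) c k = 0 := by
    rw [slice, Polynomial.mul_comp, pow_comp_X_add]
    exact Polynomial.X_pow_dvd_iff.mp (dvd_mul_right _ _) k hk
  rw [hz]; exact mpi_zero s w

lemma memPointIdeal_cons_iff (f : MvPolynomial (Fin (n + 1)) F) (c : F) (s : Fin n → F)
    (w0 : ℕ) (w : Fin n → ℕ) :
    memPointIdeal f (Fin.cons c s) (Fin.cons w0 w) ↔ memP (finSuccEquiv F n f) c s w0 w := by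
  constructor
  · intro h k hk u hu
    rw [← taylorCoeff_cons]
    refine h (u.cons k) fun i => ?_
    refine Fin.cases ?_ (fun j => ?_) i
    · simpa using hk
    · simpa using hu j
  · intro h u hu
    have h0 : u 0 < w0 := by simpa using hu 0
    have ht : ∀ j, u.tail j < w j := fun j => by
      have := hu j.succ
      simpa [Finsupp.tail, Fin.tail] using this
    have := h (u 0) h0 u.tail ht
    rw [← taylorCoeff_cons, Finsupp.cons_tail] at this
    simpa using this

lemma polyKill {P : Polynomial F} {T : Finset F} {mm : F → ℕ}
    (hdeg : P.degree < (∏ s ∈ T, (Polynomial.X - Polynomial.C s) ^ mm s).degree)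
    (hv : ∀ s ∈ T, ∀ k < mm s, (P.comp (Polynomial.X + Polynomial.C s)).coeff k = 0) :
    P = 0 := by
  have hdvd : ∀ s ∈ T, (Polynomial.X - Polynomial.C s) ^ mm s ∣ P := by
    intro s hs
    obtain ⟨t, ht⟩ := Polynomial.X_pow_dvd_iff.mpr (hv s hs)
    have h2 : (Polynomial.X + Polynomial.C s).comp (Polynomial.X - Polynomial.C s)
        = Polynomial.X := by
      rw [Polynomial.add_comp, Polynomial.X_comp, Polynomial.C_comp]; ring
    have hPeq : P = ((Polynomial.X : Polynomial F) ^ mm s * t).comp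
        (Polynomial.X - Polynomial.C s) := by
      rw [← ht, Polynomial.comp_assoc, h2, Polynomial.comp_X]
    rw [hPeq, Polynomial.mul_comp, Polynomial.pow_comp, Polynomial.X_comp]
    exact dvd_mul_right _ _
  have hpair : (↑T : Set F).Pairwise
      (Function.onFun IsCoprime fun s => (Polynomial.X - Polynomial.C s) ^ mm s) := by
    intro a _ b _ hab
    exact ((Polynomial.pairwise_coprime_X_sub_C Function.injective_id) hab).pow
  exact Polynomial.eq_zero_of_dvd_of_degree_lt (Finset.prod_dvd_of_coprime hpair hdvd) hdeg

lemma bezout (T : Finset F) (mm : F → ℕ) (c : F) (hc : c ∉ T) (w : ℕ) :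
    IsCoprime (∏ s ∈ T, (Polynomial.X - Polynomial.C s) ^ mm s)
      ((Polynomial.X - Polynomial.C c) ^ w) := by
  refine IsCoprime.prod_left fun s hs => ?_
  have hne : s ≠ c := fun h => hc (h ▸ hs)
  exact ((Polynomial.pairwise_coprime_X_sub_C Function.injective_id) hne).pow

/-- Linear functional: Taylor coefficient extraction. -/
noncomputable def tcoeffL (s : Fin n → F) (u : Fin n →₀ ℕ) :
    MvPolynomial (Fin n) F →ₗ[F] F where
  toFun g := taylorCoeff g s u
  map_add' a b := by simp [taylorCoeff, map_add, MvPolynomial.coeff_add]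
  map_smul' γ a := by simp [taylorCoeff, map_smul, MvPolynomial.coeff_smul]

/-- Linear functional: plain coefficient extraction. -/
noncomputable def coeffL (u : Fin n →₀ ℕ) : MvPolynomial (Fin n) F →ₗ[F] F where
  toFun g := coeff u g
  map_add' a b := by simp [MvPolynomial.coeff_add]
  map_smul' γ a := by simp [MvPolynomial.coeff_smul]

theorem aux : ∀ (n : ℕ) (S : Fin n → Finset F) (m : Fin n → F → ℕ) (D : Fin n → Finset F),
    (∀ i, D i ⊆ S i) → ∀ f : MvPolynomial (Fin n) F,
    (∀ s : Fin n → F, (∀ i, s i ∈ S i) → (¬ ∀ i, s i ∈ D i) →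
      memPointIdeal f s fun i => m i (s i)) →
    (∃ s : Fin n → F, (∀ i, s i ∈ D i) ∧ ¬ memPointIdeal f s fun i => m i (s i)) →
    ∑ i, (dSize S m i - dSize D m i) ≤ f.totalDegree := by
  intro n
  induction n with
  | zero => intro S m D _ f _ _; simp
  | succ n IH =>
    intro S m D hDS f hvan hexc
    classical
    obtain ⟨sst, hsD, hsNot⟩ := hexc
    set c : F := sst 0 with hc
    set s' : Fin n → F := Fin.tail sst with hs'
    set S' : Fin n → Finset F := fun i => S i.succ with hS'
    set m' : Fin n → F → ℕ := fun i => m i.succ with hm'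
    set D' : Fin n → Finset F := fun i => D i.succ with hD'
    set w' : Fin n → ℕ := fun i => m' i (s' i) with hw'
    set qF : Polynomial F := ∏ t ∈ S 0 \ D 0, (Polynomial.X - Polynomial.C t) ^ m 0 t with hqF
    have hqFmonic : qF.Monic := Polynomial.monic_prod_of_monic _ _ fun t _ =>
      (Polynomial.monic_X_sub_C t).pow _
    set B : ℕ := qF.natDegree with hB
    set qR : Polynomial (MvPolynomial (Fin n) F) :=
      qF.map (algebraMap F (MvPolynomial (Fin n) F)) with hqR
    have hqRmonic : qR.Monic := hqFmonic.map _
    have hinj : Function.Injective (algebraMap F (MvPolynomial (Fin n) F)) := by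
      rw [MvPolynomial.algebraMap_eq]; exact MvPolynomial.C_injective _ _
    have hdegq : qR.degree = qF.degree := Polynomial.degree_map_eq_of_injective hinj qF
    set Fq : Polynomial (MvPolynomial (Fin n) F) := finSuccEquiv F n f with hFq
    set hh : Polynomial (MvPolynomial (Fin n) F) := Fq /ₘ qR with hhh
    set rr : Polynomial (MvPolynomial (Fin n) F) := Fq %ₘ qR with hrr
    have hdecomp : Fq = rr + qR * hh := (Polynomial.modByMonic_add_div Fq qR).symm
    have hrrdeg : rr.degree < (B : WithBot ℕ) := by
      have h1 := Polynomial.degree_modByMonic_lt Fq hqRmonic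
      rwa [hdegq, Polynomial.degree_eq_natDegree hqFmonic.ne_zero] at h1
    -- (F1) vanishing hypotheses transferred to slices of Fq
    have F1 : ∀ c0 ∈ S 0, ∀ t : Fin n → F, (∀ i, t i ∈ S' i) →
        (c0 ∉ D 0 ∨ ¬ ∀ i, t i ∈ D' i) →
        memP Fq c0 t (m 0 c0) (fun i => m' i (t i)) := by
      intro c0 hc0 t ht hcase
      have hvan' := hvan (Fin.cons c0 t)
        (fun i => by refine Fin.cases (by simpa using hc0) (fun j => by simpa using ht j) i)
        (by
          intro hall
          rcases hcase with h | h
          · exact h (by simpa using hall 0)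
          · exact h fun j => by simpa using hall j.succ)
      have heq : (fun i => m i ((Fin.cons c0 t : Fin (n+1) → F) i)) = Fin.cons (m 0 c0) (fun i => m' i (t i)) := by
        funext i
        induction i using Fin.cases with
        | zero => simp
        | succ j => simp [hm']
      rw [heq] at hvan'
      exact (memPointIdeal_cons_iff f c0 t _ _).mp hvan'
    -- (F2) low slices of qR * hh vanish at points of S 0 \ D 0
    have F2 : ∀ c0 ∈ S 0 \ D 0, ∀ k < m 0 c0, slice (qR * hh) c0 k = 0 := by
      intro c0 hc0 k hk
      have hdvdF : ((Polynomial.X - Polynomial.C c0) ^ m 0 c0) ∣ qF :=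
        Finset.dvd_prod_of_mem _ hc0
      have hdvd : ((Polynomial.X - Polynomial.C (C c0 : MvPolynomial (Fin n) F)) ^ m 0 c0)
          ∣ qR := by
        have h2 := Polynomial.map_dvd (algebraMap F (MvPolynomial (Fin n) F)) hdvdF
        simpa [hqR, Polynomial.map_pow, MvPolynomial.algebraMap_eq] using h2
      obtain ⟨t, ht⟩ := hdvd
      rw [slice, ht, mul_assoc, Polynomial.mul_comp, pow_comp_X_add]
      exact Polynomial.X_pow_dvd_iff.mp (dvd_mul_right _ _) k hk
    -- (F3) every coefficient of rr is in every ideal of the tail grid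
    have F3 : ∀ t : Fin n → F, (∀ i, t i ∈ S' i) → ∀ j,
        memPointIdeal (rr.coeff j) t (fun i => m' i (t i)) := by
      intro t ht j u hu
      have hP0 : pmap (tcoeffL t u) rr = 0 := by
        apply polyKill (T := S 0 \ D 0) (mm := m 0)
        · rw [← hqF, Polynomial.degree_eq_natDegree hqFmonic.ne_zero, ← hB]
          exact lt_of_le_of_lt (pmap_degree_le _ rr) hrrdeg
        · intro c0 hc0 k hk
          rw [sliceF_pmap]
          have hsl : slice rr c0 k = slice Fq c0 k - slice (qR * hh) c0 k := by
            rw [hdecomp, slice_add]; ring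
          have hmem : memPointIdeal (slice rr c0 k) t (fun i => m' i (t i)) := by
            rw [hsl, F2 c0 hc0 k hk, sub_zero]
            exact F1 c0 (Finset.mem_sdiff.mp hc0).1 t ht
              (Or.inl (Finset.mem_sdiff.mp hc0).2) k hk
          exact hmem u hu
      have h1 : taylorCoeff (rr.coeff j) t u = (pmap (tcoeffL t u) rr).coeff j := by
        rw [pmap_coeff]; rfl
      rw [h1, hP0, Polynomial.coeff_zero]
    -- (F4) memP for rr, arbitrary center and order
    have F4 : ∀ t : Fin n → F, (∀ i, t i ∈ S' i) → ∀ c0 w0,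
        memP rr c0 t w0 (fun i => m' i (t i)) := by
      intro t ht c0 w0 k _
      rw [slice_eq_sum]
      exact mpi_sum fun j _ => mpi_mul' (F3 t ht j) _
    have hs'S : ∀ i, s' i ∈ S' i := fun i => hDS i.succ (hsD i.succ)
    have hsd : sst = Fin.cons c s' := (Fin.cons_self_tail sst).symm
    have hwd : (fun i => m i (sst i)) = Fin.cons (m 0 c) w' := by
      funext i
      induction i using Fin.cases with
      | zero => simp [hc]
      | succ j => simp [hw', hm', hs', Fin.tail]
    -- (F5) exceptional failure transfers to Fq
    have hNotP : ¬ memP Fq c s' (m 0 c) w' := by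
      intro hmem
      apply hsNot
      have h2 := (memPointIdeal_cons_iff f c s' (m 0 c) w').mpr hmem
      rw [← hsd] at h2
      rwa [hwd]
    -- (F6) failure for qR * hh
    have hNotQH : ¬ memP (qR * hh) c s' (m 0 c) w' := by
      intro hmem
      apply hNotP
      intro k hk
      have h2 : slice Fq c k = slice rr c k + slice (qR * hh) c k := by
        rw [hdecomp, slice_add]
      rw [h2]
      exact mpi_add (F4 s' hs'S c (m 0 c) k hk) (hmem k hk)
    -- (F7) failure for hh
    have hNotH : ¬ memP hh c s' (m 0 c) w' := fun hmem => hNotQH (memP_mul hmem qR)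
    -- (F8) pick the failing slice
    simp only [memP, not_forall, Classical.not_imp] at hNotH
    obtain ⟨k0, hk0lt, hg⟩ := hNotH
    set g : MvPolynomial (Fin n) F := slice hh c k0 with hgdef
    -- (F9) vanishing for g on the punctured tail grid
    have F9 : ∀ t : Fin n → F, (∀ i, t i ∈ S' i) → (¬ ∀ i, t i ∈ D' i) →
        memPointIdeal g t (fun i => m' i (t i)) := by
      intro t ht htD
      have hqh : memP (qR * hh) c t (m 0 c) (fun i => m' i (t i)) := by
        have h1 := F1 c (hDS 0 (hsD 0)) t ht (Or.inr htD)
        intro k hk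
        have h2 : slice (qR * hh) c k = slice Fq c k - slice rr c k := by
          rw [hdecomp, slice_add]; ring
        rw [h2]
        exact mpi_sub (h1 k hk) (F4 t ht c (m 0 c) k hk)
      have hcnot : c ∉ S 0 \ D 0 := fun h => (Finset.mem_sdiff.mp h).2 (hsD 0)
      have hcop : IsCoprime qR
          ((Polynomial.X - Polynomial.C (C c : MvPolynomial (Fin n) F)) ^ m 0 c) := by
        have h3 := (bezout (S 0 \ D 0) (m 0) c hcnot (m 0 c)).map
          (Polynomial.mapRingHom (algebraMap F (MvPolynomial (Fin n) F)))
        simp only [Polynomial.coe_mapRingHom, Polynomial.map_pow, Polynomial.map_sub,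
          Polynomial.map_X, Polynomial.map_C, MvPolynomial.algebraMap_eq] at h3
        rw [hqR]
        exact h3
      obtain ⟨a, b, hab⟩ := hcop
      have hh_eq : hh = a * (qR * hh)
          + (Polynomial.X - Polynomial.C (C c)) ^ m 0 c * (b * hh) := by
        have h4 : (a * qR + b * (Polynomial.X - Polynomial.C (C c)) ^ m 0 c) * hh = hh := by
          rw [hab, one_mul]
        conv_lhs => rw [← h4]
        ring
      have hmem : memP hh c t (m 0 c) (fun i => m' i (t i)) := by
        rw [hh_eq]
        intro k hk
        rw [slice_add]
        exact mpi_add (memP_mul hqh a k hk)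
          (memP_Xpow_mul c t (m 0 c) (fun i => m' i (t i)) (b * hh) k hk)
      exact hmem k0 hk0lt
    -- (F10) induction hypothesis
    have hIH := IH S' m' D' (fun i => hDS i.succ) g F9
      ⟨s', fun i => hsD i.succ, hg⟩
    -- (F11) top monomial of g
    have hg0 : g ≠ 0 := fun h => hg (h ▸ mpi_zero s' w')
    have hgsupp : g.support.Nonempty :=
      Finset.nonempty_iff_ne_empty.mpr (fun h => hg0 (MvPolynomial.support_eq_empty.mp h))
    obtain ⟨w0, hw0supp, hw0eq⟩ :=
      Finset.exists_mem_eq_sup g.support hgsupp (fun u : Fin n →₀ ℕ => u.sum fun _ e => e)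
    have hdeg_g : g.totalDegree = w0.sum fun _ e => e := hw0eq
    -- (F13) the coefficient functional and the degree chase
    set M : MvPolynomial (Fin n) F →ₗ[F] F := coeffL w0 with hM
    set Ph : Polynomial F := pmap M hh with hPh
    have hPh0 : Ph ≠ 0 := by
      intro h0
      have h1 := sliceF_pmap M hh c k0
      rw [← hPh, h0, Polynomial.zero_comp, Polynomial.coeff_zero] at h1
      exact (MvPolynomial.mem_support_iff.mp hw0supp) h1.symm
    have hrrj : ∀ j, B ≤ j → rr.coeff j = 0 := fun j hj =>
      Polynomial.coeff_eq_zero_of_degree_lt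
        (lt_of_lt_of_le hrrdeg (by exact_mod_cast hj))
    -- pmap of qR * hh is qF * Ph
    have hmul : ∀ j, M ((qR * hh).coeff j) = (qF * Ph).coeff j := by
      intro j
      rw [Polynomial.coeff_mul, Polynomial.coeff_mul, map_sum]
      refine Finset.sum_congr rfl fun x _ => ?_
      have hcf : qR.coeff x.1 = algebraMap F _ (qF.coeff x.1) := by
        rw [hqR, Polynomial.coeff_map]
      rw [hcf]
      have : algebraMap F (MvPolynomial (Fin n) F) (qF.coeff x.1) * hh.coeff x.2
          = (qF.coeff x.1) • hh.coeff x.2 := by rw [Algebra.smul_def]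
      rw [this, map_smul, smul_eq_mul, pmap_coeff]
    set j0 : ℕ := B + Ph.natDegree with hj0
    have hcoefff : M (Fq.coeff j0) ≠ 0 := by
      have h1 : Fq.coeff j0 = rr.coeff j0 + (qR * hh).coeff j0 := by
        rw [hdecomp, Polynomial.coeff_add]
      rw [h1, map_add, hrrj j0 (Nat.le_add_right _ _), map_zero, zero_add, hmul]
      have h2 : (qF * Ph).coeff j0 = qF.leadingCoeff * Ph.leadingCoeff := by
        rw [hj0, hB]
        exact Polynomial.coeff_mul_degree_add_degree qF Ph
      rw [h2, hqFmonic.leadingCoeff, one_mul]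
      exact Polynomial.leadingCoeff_ne_zero.mpr hPh0
    have hsupp_f : w0.cons j0 ∈ f.support := by
      rw [MvPolynomial.mem_support_iff, ← finSuccEquiv_coeff_coeff]
      exact hcoefff
    have hle := MvPolynomial.le_totalDegree hsupp_f
    have hsum : ((w0.cons j0).sum fun _ e => e) = j0 + (w0.sum fun _ e => e) :=
      Finsupp.sum_cons n w0 j0
    -- size bookkeeping
    have hBsum : B = ∑ t ∈ S 0 \ D 0, m 0 t := by
      rw [hB, hqF, Polynomial.natDegree_prod _ _
        (fun t _ => pow_ne_zero _ (Polynomial.X_sub_C_ne_zero t))]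
      exact Finset.sum_congr rfl fun t _ => by
        rw [Polynomial.natDegree_pow, Polynomial.natDegree_X_sub_C, mul_one]
    have hB' : dSize S m 0 - dSize D m 0 = B := by
      have h4 := Finset.sum_sdiff (f := m 0) (hDS 0)
      have h5 : dSize S m 0 = ∑ t ∈ S 0, m 0 t := rfl
      have h6 : dSize D m 0 = ∑ t ∈ D 0, m 0 t := rfl
      omega
    have hsplit : ∑ i, (dSize S m i - dSize D m i)
        = (dSize S m 0 - dSize D m 0) + ∑ i : Fin n, (dSize S' m' i - dSize D' m' i) := by
      rw [Fin.sum_univ_succ]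
      rfl
    rw [hsplit, hB']
    calc B + ∑ i : Fin n, (dSize S' m' i - dSize D' m' i)
        ≤ B + g.totalDegree := Nat.add_le_add_left hIH B
      _ ≤ j0 + (w0.sum fun _ e => e) := by
          rw [hdeg_g, hj0]; omega
      _ = ((w0.cons j0).sum fun _ e => e) := hsum.symm
      _ ≤ f.totalDegree := hle

end PCN

/-- The punctured (Ball–Serra) theorem for multisets, degree bound: if `f` lies in
`I(s, m(s))` for every `s ∈ S` outside `D = D_1 × ⋯ × D_n` but `f ∉ I(s*, m(s*))` for
some `s* ∈ D`, then `deg f ≥ Σ_i (d(S_i) - d(D_i))`. -/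
theorem stmt_7 {F : Type*} [Field F] {n : ℕ} (hn : 1 ≤ n)
    (S : Fin n → Finset F) (hS : ∀ i, (S i).Nonempty)
    (m : Fin n → F → ℕ) (hm : ∀ i, ∀ s ∈ S i, 1 ≤ m i s)
    (D : Fin n → Finset F) (hD : ∀ i, (D i).Nonempty) (hDS : ∀ i, D i ⊆ S i)
    (f : MvPolynomial (Fin n) F)
    (hvan : ∀ s : Fin n → F, (∀ i, s i ∈ S i) → (¬ ∀ i, s i ∈ D i) →
      memPointIdeal f s fun i => m i (s i))
    (hexc : ∃ s : Fin n → F, (∀ i, s i ∈ D i) ∧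
      ¬ memPointIdeal f s fun i => m i (s i)) :
    ∑ i, (dSize S m i - dSize D m i) ≤ f.totalDegree :=
  PCN.aux n S m D hDS f hvan hexc
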